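/- Let R be a commutative Noetherian ring of prime characteristic p whose Frobenius endomorphism is finite and flat, let b be an ideal of R, and let q = p^e for a positive integer e. Then the collection of ideals J of R satisfying b ⊆ J^{[q]} has a smallest element with respect to inclusion; explicitly, the ideal I = ⋂ { J : J an ideal of R with b ⊆ J^{[q]} } itself satisfies b ⊆ I^{[q]}, and hence is the unique smallest ideal J with b ⊆ J^{[q]}. -/

import Mathlib

open Ideal

/-- The `q`-th bracket power `J^{[q]}` of an ideal: the ideal generated by
the `q`-th powers of the elements of `J`. -/
def bracketPow {R : Type*} [CommRing R] (J : Ideal R) (q : ℕ) : Ideal R :=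
  Ideal.span ((fun x => x ^ q) '' (J : Set R))

/-- The ideal `b^{[1/q]}`: the smallest ideal `J` with `b ⊆ J^{[q]}`
(realized as the intersection of all such ideals). -/
def frobRoot {R : Type*} [CommRing R] (b : Ideal R) (q : ℕ) : Ideal R :=
  sInf {J : Ideal R | b ≤ bracketPow J q}

/-- The generalized test ideal `τ(a^c) = ⋃_{e ≥ 1} (a^{⌈c p^e⌉})^{[1/p^e]}`. -/
noncomputable def testIdeal {R : Type*} [CommRing R] (p : ℕ) (a : Ideal R) (c : ℝ) : Ideal R :=
  ⨆ e : ℕ, frobRoot (a ^ ⌈c * (p : ℝ) ^ (e + 1)⌉₊) (p ^ (e + 1))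

/-- `ν_a^J(q)`: the largest nonnegative integer `r` with `a^r ⊄ J^{[q]}`
(and `0` if there is no such `r`). -/
noncomputable def nuF {R : Type*} [CommRing R] (a J : Ideal R) (q : ℕ) : ℕ :=
  sSup {r : ℕ | ¬ a ^ r ≤ bracketPow J q}

/-- The F-threshold `c^J(a) = sup_{e ≥ 1} ν_a^J(p^e)/p^e`. -/
noncomputable def FThreshold {R : Type*} [CommRing R] (p : ℕ) (a J : Ideal R) : ℝ :=
  ⨆ e : ℕ, (nuF a J (p ^ (e + 1)) : ℝ) / (p : ℝ) ^ (e + 1)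

/-- `α > 0` is an F-jumping exponent of `a` if `τ(a^α) ≠ τ(a^c)` for all `0 ≤ c < α`. -/
def IsFJumpingExponent {R : Type*} [CommRing R] (p : ℕ) (a : Ideal R) (α : ℝ) : Prop :=
  0 < α ∧ ∀ c : ℝ, 0 ≤ c → c < α → testIdeal p a c ≠ testIdeal p a α

/-- `R` as a module over itself with scalars acting through `f`. -/
@[nolint unusedArguments]
def Tw {R : Type*} [CommRing R] (_f : R →+* R) : Type _ := R

namespace Tw

variable {R : Type*} [CommRing R] (f : R →+* R)

instance : AddCommGroup (Tw f) := inferInstanceAs (AddCommGroup R)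
instance : Module R (Tw f) := Module.compHom R f

/-- The identity, as a map `R → Tw f`. -/
def mk : R → Tw f := id

/-- The identity, as a map `Tw f → R`. -/
def unmk : Tw f → R := id

lemma smul_def (r : R) (x : Tw f) : r • x = mk f (f r * unmk f x) := rfl

lemma finite (h : f.Finite) : Module.Finite R (Tw f) := h

lemma flat (h : f.Flat) : Module.Flat R (Tw f) := h

lemma projective [IsNoetherianRing R] (hfin : f.Finite) (hflat : f.Flat) :
    Module.Projective R (Tw f) := by
  haveI := finite f hfin
  haveI := flat f hflat
  haveI := Module.finitePresentation_of_finite R (Tw f)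
  rw [← Module.freeLocus_eq_univ_iff]
  exact Module.freeLocus_eq_univ

end Tw

open Ideal in
lemma le_map_sInf {R : Type*} [CommRing R] (f : R →+* R)
    (hproj : Module.Projective R (Tw f)) (b : Ideal R) :
    b ≤ Ideal.map f (sInf {J : Ideal R | b ≤ Ideal.map f J}) := by
  obtain ⟨s, hs⟩ := hproj.out
  intro y hy
  -- every `R`-linear functional on `Tw f` maps `map f J` into `J`
  have hcoord : ∀ J : Ideal R, b ≤ Ideal.map f J → ∀ i : Tw f, s (Tw.mk f y) i ∈ J := by
    intro J hJ i
    -- step 1 : `y ∈ J • (⊤ : Submodule R (Tw f))`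
    have hmem : Tw.mk f y ∈ (J • ⊤ : Submodule R (Tw f)) := by
      have h1 : y ∈ Ideal.map f J := hJ hy
      rw [Ideal.map] at h1
      refine Submodule.span_induction ?_ ?_ ?_ ?_ h1
      · rintro _ ⟨j, hj, rfl⟩
        have : Tw.mk f (f j) = j • (Tw.mk f 1) :=
          congrArg (Tw.mk f) (mul_one (f j)).symm
        exact this ▸ Submodule.smul_mem_smul hj Submodule.mem_top
      · exact Submodule.zero_mem _
      · intro a b _ _ ha hb; exact Submodule.add_mem _ ha hb
      · intro r z _ hz
        refine Submodule.smul_induction_on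
          (p := fun z : Tw f => Tw.mk f (r * Tw.unmk f z) ∈ (J • ⊤ : Submodule R (Tw f)))
          hz ?_ ?_
        · intro j hj n _
          have : Tw.mk f (r * Tw.unmk f (j • n)) = j • (Tw.mk f (r * Tw.unmk f n)) :=
            congrArg (Tw.mk f) (mul_left_comm r (f j) (Tw.unmk f n))
          exact this ▸ Submodule.smul_mem_smul hj Submodule.mem_top
        · intro a b ha hb
          have : Tw.mk f (r * Tw.unmk f (a + b))
              = Tw.mk f (r * Tw.unmk f a) + Tw.mk f (r * Tw.unmk f b) :=
            congrArg (Tw.mk f) (mul_add r (Tw.unmk f a) (Tw.unmk f b))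
          exact this ▸ Submodule.add_mem _ ha hb
    -- step 2 : apply the coordinate functional
    set g : Tw f →ₗ[R] R := (Finsupp.lapply i).comp s with hgdef
    have h1 : g (Tw.mk f y) ∈ Submodule.map g (J • (⊤ : Submodule R (Tw f))) :=
      Submodule.mem_map_of_mem hmem
    rw [Submodule.map_smul''] at h1
    have h2 : J • (Submodule.map g (⊤ : Submodule R (Tw f))) ≤ J := by
      refine le_trans (Submodule.smul_le.mpr ?_) le_rfl
      intro r hr n _
      simpa [smul_eq_mul] using J.mul_mem_right n hr
    have h3 := h2 h1
    simpa [hgdef] using h3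
  -- step 3 : conclude
  have hy' : ∀ i, s (Tw.mk f y) i ∈ sInf {J : Ideal R | b ≤ Ideal.map f J} := fun i =>
    Ideal.mem_sInf.mpr fun J hJ => hcoord J hJ i
  have hrep := hs (Tw.mk f y)
  rw [Finsupp.linearCombination_apply] at hrep
  have hsum : Tw.unmk f ((s (Tw.mk f y)).sum fun i c => c • (id i : Tw f)) ∈
      Ideal.map f (sInf {J : Ideal R | b ≤ Ideal.map f J}) := by
    rw [Finsupp.sum]
    have : Tw.unmk f (∑ i ∈ (s (Tw.mk f y)).support, (s (Tw.mk f y)) i • (id i : Tw f))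
        = ∑ i ∈ (s (Tw.mk f y)).support, (f ((s (Tw.mk f y)) i) * Tw.unmk f i) := rfl
    rw [this]
    refine Ideal.sum_mem _ fun i _ => ?_
    exact Ideal.mul_mem_right _ _ (Ideal.mem_map_of_mem f (hy' i))
  rw [hrep] at hsum
  exact hsum


/-- existence of the smallest ideal `J` with `b ⊆ J^{[q]}`. -/
theorem stmt0_smallest_frobRoot
    {R : Type*} [CommRing R] [IsNoetherianRing R] (p : ℕ) [Fact p.Prime] [CharP R p]
    (hfin : (frobenius R p).Finite) (hflat : (frobenius R p).Flat)
    (b : Ideal R) (e : ℕ) (he : 1 ≤ e) (q : ℕ) (hq : q = p ^ e) :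
    b ≤ bracketPow (sInf {J : Ideal R | b ≤ bracketPow J q}) q ∧
      ∀ J : Ideal R, b ≤ bracketPow J q →
        sInf {J : Ideal R | b ≤ bracketPow J q} ≤ J := by
  subst hq
  haveI : ExpChar R p := ExpChar.prime Fact.out
  have hb : ∀ J : Ideal R, bracketPow J (p ^ e) = Ideal.map (iterateFrobenius R p e) J := by
    intro J
    unfold bracketPow Ideal.map
    congr 1
  have hfin' : ∀ n : ℕ, (iterateFrobenius R p n).Finite := by
    intro n
    induction n with
    | zero => rw [iterateFrobenius_zero]; exact RingHom.Finite.id R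
    | succ n ih =>
      rw [show n + 1 = 1 + n from Nat.add_comm n 1, iterateFrobenius_add, iterateFrobenius_one]
      exact RingHom.Finite.comp hfin ih
  have hflat' : ∀ n : ℕ, (iterateFrobenius R p n).Flat := by
    intro n
    induction n with
    | zero =>
      rw [iterateFrobenius_zero]
      exact RingHom.Flat.id R
    | succ n ih =>
      rw [show n + 1 = 1 + n from Nat.add_comm n 1, iterateFrobenius_add, iterateFrobenius_one]
      haveI := ih
      haveI := hflat
      exact RingHom.Flat.comp ih hflat
  have hproj := Tw.projective (iterateFrobenius R p e) (hfin' e) (hflat' e)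
  constructor
  · simpa only [hb] using le_map_sInf (iterateFrobenius R p e) hproj b
  · intro J hJ
    exact sInf_le hJ
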